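/- Let m ≥ 1, let z ∈ ℂ with Im z > 0, and let L₁,…,L_m and L̂₁,…,L̂_m be symmetric positive definite real K×K matrices, regarded as complex matrices. Define D_m = L_m − z·L̂_m⁻¹ and, for k = m−1,…,1, D_k = (L_k⁻¹ + D_{k+1}⁻¹)⁻¹ − z·L̂_k⁻¹. Then for every k the Hermitian matrix i·(D_k − D_kᴴ) is positive definite (so D_k, and each intermediate matrix L_k⁻¹ + D_{k+1}⁻¹, is invertible), and the S-fraction value D₁⁻¹ satisfies: i·((D₁⁻¹)ᴴ − D₁⁻¹) is positive definite, i.e., the imaginary part of D₁⁻¹ is positive definite. -/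

import Mathlib

open Matrix
open scoped ComplexOrder

namespace Stmt13Aux

variable {K : ℕ}

lemma posDef_conj {A B : Matrix (Fin K) (Fin K) ℂ} (hA : A.PosDef) (hB : IsUnit B) :
    (Bᴴ * A * B).PosDef := by
  refine Matrix.PosDef.of_dotProduct_mulVec_pos (Matrix.isHermitian_conjTranspose_mul_mul B hA.1) fun x hx => ?_
  have hinj := Matrix.mulVec_injective_iff_isUnit.mpr hB
  have hBx : B *ᵥ x ≠ 0 := fun h => hx (hinj (by simpa using h))
  simpa only [star_mulVec, dotProduct_mulVec, vecMul_vecMul] using hA.dotProduct_mulVec_pos hBx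

lemma isUnit_of_im_negDef {M : Matrix (Fin K) (Fin K) ℂ}
    (h : (Complex.I • (M - Mᴴ)).PosDef) : IsUnit M := by
  rw [Matrix.isUnit_iff_isUnit_det, isUnit_iff_ne_zero]
  intro hdet
  obtain ⟨v, hv, hMv⟩ := Matrix.exists_mulVec_eq_zero_iff.mpr hdet
  have hpos := h.dotProduct_mulVec_pos hv
  have h1 : star v ⬝ᵥ (Mᴴ *ᵥ v) = 0 := by
    rw [dotProduct_mulVec, ← star_mulVec, hMv]
    simp
  rw [Matrix.smul_mulVec, Matrix.sub_mulVec, dotProduct_smul, dotProduct_sub, h1, hMv,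
    dotProduct_zero] at hpos
  simp at hpos

lemma flip {M : Matrix (Fin K) (Fin K) ℂ}
    (h : (Complex.I • (M - Mᴴ)).PosDef) :
    (Complex.I • ((M⁻¹)ᴴ - M⁻¹)).PosDef := by
  have hM := isUnit_of_im_negDef h
  have hdet : IsUnit M.det := (Matrix.isUnit_iff_isUnit_det M).mp hM
  have hdetH : IsUnit Mᴴ.det := by rwa [Matrix.det_conjTranspose, isUnit_star]
  have hMinv : IsUnit M⁻¹ := by
    rw [Matrix.isUnit_iff_isUnit_det]
    exact Matrix.isUnit_nonsing_inv_det M hdet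
  have key : (M⁻¹)ᴴ * (Complex.I • (M - Mᴴ)) * M⁻¹ = Complex.I • ((M⁻¹)ᴴ - M⁻¹) := by
    rw [Matrix.conjTranspose_nonsing_inv, Matrix.mul_smul, Matrix.smul_mul]
    congr 1
    rw [Matrix.mul_sub, Matrix.sub_mul, Matrix.mul_assoc, Matrix.mul_nonsing_inv M hdet,
      Matrix.nonsing_inv_mul Mᴴ hdetH, Matrix.mul_one, Matrix.one_mul]
  exact key ▸ posDef_conj h hMinv

lemma isUnit_of_im_posDef {M : Matrix (Fin K) (Fin K) ℂ}
    (h : (Complex.I • (Mᴴ - M)).PosDef) : IsUnit M := by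
  have h2 : (Complex.I • (Mᴴ - (Mᴴ)ᴴ)).PosDef := by simpa using h
  have h3 := isUnit_of_im_negDef h2
  rw [Matrix.isUnit_iff_isUnit_det, Matrix.det_conjTranspose, isUnit_star] at h3
  rwa [Matrix.isUnit_iff_isUnit_det]

lemma flip' {M : Matrix (Fin K) (Fin K) ℂ}
    (h : (Complex.I • (Mᴴ - M)).PosDef) :
    (Complex.I • (M⁻¹ - (M⁻¹)ᴴ)).PosDef := by
  have h2 : (Complex.I • (Mᴴ - (Mᴴ)ᴴ)).PosDef := by simpa using h
  have h3 := flip h2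
  rw [← Matrix.conjTranspose_nonsing_inv] at h3
  simpa using h3

open scoped MatrixOrder in
lemma posDef_map {A : Matrix (Fin K) (Fin K) ℝ} (hA : A.PosDef) :
    (A.map Complex.ofReal).PosDef := by
  classical
  have hPS := hA.posSemidef
  set S := CFC.sqrt A with hSdef
  have hSS : S * S = A := CFC.sqrt_mul_sqrt_self A hPS.nonneg
  have hSherm : S.IsHermitian := (CFC.sqrt_nonneg A).posSemidef.1
  have hSdet : S.det ≠ 0 := by
    intro h
    have : A.det = 0 := by rw [← hSS, Matrix.det_mul, h, mul_zero]
    exact hA.det_pos.ne' this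
  have hdetmap : (S.map Complex.ofReal).det = (S.det : ℂ) :=
    (RingHom.map_det Complex.ofRealHom S).symm
  have hCu : IsUnit (S.map Complex.ofReal) := by
    rw [Matrix.isUnit_iff_isUnit_det, isUnit_iff_ne_zero, hdetmap]
    exact Complex.ofReal_ne_zero.mpr hSdet
  have hCh : (S.map Complex.ofReal)ᴴ = S.map Complex.ofReal := by
    rw [← Matrix.conjTranspose_map Complex.ofReal (fun a => by simp), hSherm.eq]
  have hmap : A.map Complex.ofReal =
      (S.map Complex.ofReal)ᴴ * 1 * (S.map Complex.ofReal) := by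
    rw [hCh, Matrix.mul_one, ← hSS]
    have := Matrix.map_mul (L := S) (M := S) (f := Complex.ofRealHom)
    simpa only [Matrix.map, Complex.ofRealHom_eq_coe] using this
  exact hmap ▸ posDef_conj Matrix.PosDef.one hCu

lemma posDef_real_smul {B : Matrix (Fin K) (Fin K) ℂ} (hB : B.PosDef) {r : ℝ} (hr : 0 < r) :
    (((r : ℂ)) • B).PosDef := by
  refine Matrix.PosDef.of_dotProduct_mulVec_pos ?_ fun x hx => ?_
  · show ((r : ℂ) • B)ᴴ = (r : ℂ) • B
    rw [Matrix.conjTranspose_smul, hB.1.eq]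
    simp [Complex.conj_ofReal]
  · rw [Matrix.smul_mulVec, dotProduct_smul, smul_eq_mul]
    exact mul_pos (by exact_mod_cast hr) (hB.dotProduct_mulVec_pos hx)

lemma sub_z_smul {C B : Matrix (Fin K) (Fin K) ℂ} {z : ℂ} (hz : 0 < z.im)
    (hC : (Complex.I • (C - Cᴴ)).PosSemidef) (hB : B.PosDef) :
    (Complex.I • ((C - z • B) - (C - z • B)ᴴ)).PosDef := by
  have hid : Complex.I • ((C - z • B) - (C - z • B)ᴴ)
      = Complex.I • (C - Cᴴ) + ((2 * z.im : ℝ) : ℂ) • B := by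
    rw [Matrix.conjTranspose_sub, Matrix.conjTranspose_smul, hB.1.eq, sub_sub_sub_comm,
      ← sub_smul, Complex.star_def, Complex.sub_conj, smul_sub, smul_smul, sub_eq_add_neg, ← neg_smul]
    congr 1
    have : Complex.I * (((2 * z.im : ℝ) : ℂ) * Complex.I) = -(((2 * z.im : ℝ) : ℂ)) := by
      ring_nf
      simp [Complex.I_sq]
    rw [this, neg_neg]
  rw [hid]
  exact Matrix.PosDef.posSemidef_add hC (posDef_real_smul hB (by positivity))

lemma add_im {Ak D : Matrix (Fin K) (Fin K) ℂ} (hAk : Ak.IsHermitian)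
    (hD : (Complex.I • (D - Dᴴ)).PosDef) :
    (Complex.I • ((Ak + D⁻¹)ᴴ - (Ak + D⁻¹))).PosDef := by
  have hinv := flip hD
  have hkey : (Ak + D⁻¹)ᴴ - (Ak + D⁻¹) = (D⁻¹)ᴴ - D⁻¹ := by
    rw [Matrix.conjTranspose_add, hAk.eq]
    abel
  rw [hkey]
  exact hinv

end Stmt13Aux

open Stmt13Aux in
theorem stmt13 {K : ℕ} (m : ℕ) (hm : 1 ≤ m) (z : ℂ) (hz : 0 < z.im)
    (L Lhat : ℕ → Matrix (Fin K) (Fin K) ℝ)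
    (hL : ∀ k, 1 ≤ k → k ≤ m → (L k).PosDef)
    (hLhat : ∀ k, 1 ≤ k → k ≤ m → (Lhat k).PosDef)
    (D : ℕ → Matrix (Fin K) (Fin K) ℂ)
    (hDm : D m = (L m).map Complex.ofReal - z • ((Lhat m).map Complex.ofReal)⁻¹)
    (hDk : ∀ k, 1 ≤ k → k < m →
      D k = (((L k).map Complex.ofReal)⁻¹ + (D (k + 1))⁻¹)⁻¹ -
        z • ((Lhat k).map Complex.ofReal)⁻¹) :
    (∀ k, 1 ≤ k → k ≤ m →
      (Complex.I • (D k - (D k)ᴴ)).PosDef ∧ IsUnit (D k)) ∧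
    (∀ k, 1 ≤ k → k < m →
      IsUnit (((L k).map Complex.ofReal)⁻¹ + (D (k + 1))⁻¹)) ∧
    (Complex.I • (((D 1)⁻¹)ᴴ - (D 1)⁻¹)).PosDef := by
  have hmain : ∀ j k, k + j = m → 1 ≤ k → (Complex.I • (D k - (D k)ᴴ)).PosDef := by
    intro j
    induction j with
    | zero =>
      intro k hk h1
      have hk' : k = m := by omega
      subst hk'
      rw [hDm]
      have hB : (((Lhat k).map Complex.ofReal)⁻¹).PosDef := (posDef_map (hLhat k h1 le_rfl)).inv
      have hC : (Complex.I • ((L k).map Complex.ofReal -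
          ((L k).map Complex.ofReal)ᴴ)).PosSemidef := by
        rw [(posDef_map (hL k h1 le_rfl)).1.eq, sub_self, smul_zero]
        exact Matrix.PosSemidef.zero
      exact sub_z_smul hz hC hB
    | succ j ih =>
      intro k hk h1
      have hk1 : (Complex.I • (D (k + 1) - (D (k + 1))ᴴ)).PosDef := ih (k + 1) (by omega) (by omega)
      rw [hDk k h1 (by omega)]
      have hAk : (((L k).map Complex.ofReal)⁻¹).IsHermitian :=
        ((posDef_map (hL k h1 (by omega))).inv).1
      have hEh := add_im hAk hk1
      have hC := flip' hEh
      have hB : (((Lhat k).map Complex.ofReal)⁻¹).PosDef :=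
        (posDef_map (hLhat k h1 (by omega))).inv
      exact sub_z_smul hz hC.posSemidef hB
  have hall : ∀ k, 1 ≤ k → k ≤ m → (Complex.I • (D k - (D k)ᴴ)).PosDef := fun k h1 h2 =>
    hmain (m - k) k (by omega) h1
  refine ⟨fun k h1 h2 => ⟨hall k h1 h2, isUnit_of_im_negDef (hall k h1 h2)⟩, ?_, ?_⟩
  · intro k h1 h2
    have hk1 := hall (k + 1) (by omega) (by omega)
    have hAk : (((L k).map Complex.ofReal)⁻¹).IsHermitian :=
      ((posDef_map (hL k h1 (by omega))).inv).1
    exact isUnit_of_im_posDef (add_im hAk hk1)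
  · exact flip (hall 1 le_rfl hm)
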